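/- (Quasi-preservation of the centers of vorticity of clusters) Let α ≥ 0, let a_1, …, a_N be nonzero reals, and let (x_1, …, x_N) be a solution of the α-point-vortex system on [0,T). Then there exists a constant C > 0 depending only on a_1, …, a_N such that for every nonempty subset P of {1, …, N} with ∑_{i∈P} a_i ≠ 0, the barycenter B_P(t) := (∑_{i∈P} a_i)^{-1} ∑_{i∈P} a_i x_i(t) is differentiable and satisfies, for all t ∈ [0,T), |B_P'(t)| ≤ C ∑_{i∈P} ∑_{j∉P} 1 / |x_i(t) − x_j(t)|^α. -/

import Mathlib

open Finset


/-- **Quasi-preservation of the centers of vorticity of clusters.**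
Identifying `ℝ²` with `ℂ` (so `v^⊥ = I * v`), let `α ≥ 0` and let `a i` be nonzero
intensities. There is a constant `C > 0` depending only on the intensities such that for every
solution of the `α`-point-vortex system on `[0,T)` and every nonempty cluster
`P ⊆ {1,…,N}` with `∑_{i∈P} a i ≠ 0`, the barycenter
`B_P(t) = (∑_{i∈P} a i)⁻¹ ∑_{i∈P} a i • x i t` is differentiable with
`‖B_P'(t)‖ ≤ C ∑_{i∈P} ∑_{j∉P} 1/‖x i t − x j t‖^α` for all `t ∈ [0,T)`. -/
theorem quasi_preservation_barycenter (N : ℕ) (α : ℝ) (hα : 0 ≤ α)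
    (a : Fin N → ℝ) (ha : ∀ i, a i ≠ 0) :
    ∃ C > 0, ∀ T : ℝ, 0 < T → ∀ x : Fin N → ℝ → ℂ,
      (∀ i j, i ≠ j → ∀ t ∈ Set.Ico (0:ℝ) T, x i t ≠ x j t) →
      (∀ i, ∀ t ∈ Set.Ico (0:ℝ) T,
        HasDerivWithinAt (x i)
          (∑ j ∈ Finset.univ.filter (fun j => j ≠ i),
            (a j / ‖x i t - x j t‖ ^ (α + 1)) • (Complex.I * (x i t - x j t)))
          (Set.Ico (0:ℝ) T) t) →
      ∀ P : Finset (Fin N), P.Nonempty → (∑ i ∈ P, a i) ≠ 0 →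
      ∀ t ∈ Set.Ico (0:ℝ) T, ∃ v : ℂ,
        HasDerivWithinAt (fun s => (∑ i ∈ P, a i)⁻¹ • ∑ i ∈ P, a i • x i s) v
          (Set.Ico (0:ℝ) T) t ∧
        ‖v‖ ≤ C * ∑ i ∈ P, ∑ j ∈ Pᶜ, 1 / ‖x i t - x j t‖ ^ α := by
  classical
  set M : ℝ := 1 + ∑ i, |a i| with hMdef
  have hM1 : 1 ≤ M := le_add_of_nonneg_right (sum_nonneg fun i _ => abs_nonneg _)
  have hai : ∀ i, |a i| ≤ M := fun i => by
    have := Finset.single_le_sum (f := fun i => |a i|) (fun j _ => abs_nonneg _) (mem_univ i)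
    simp only [hMdef]; linarith
  set S : ℝ := ∑ P : Finset (Fin N),
      (if (∑ i ∈ P, a i) = 0 then 0 else |∑ i ∈ P, a i|⁻¹) with hSdef
  have hS0 : 0 ≤ S := sum_nonneg fun P _ => by
    split_ifs with h
    · exact le_rfl
    · positivity
  refine ⟨(1 + S) * M ^ 2, by nlinarith, ?_⟩
  intro T hT x hsep hderiv P hP hsum t ht
  -- the pairwise interaction term
  set F : Fin N → Fin N → ℂ := fun i j =>
    ((a i * a j) / ‖x i t - x j t‖ ^ (α + 1)) • (Complex.I * (x i t - x j t)) with hF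
  -- derivative of the weighted sum
  have hv : HasDerivWithinAt (fun s => (∑ i ∈ P, a i)⁻¹ • ∑ i ∈ P, a i • x i s)
      ((∑ i ∈ P, a i)⁻¹ • ∑ i ∈ P, ∑ j ∈ Finset.univ.filter (fun j => j ≠ i), F i j)
      (Set.Ico (0:ℝ) T) t := by
    refine HasDerivWithinAt.const_smul (f := fun s => ∑ i ∈ P, a i • x i s) (∑ i ∈ P, a i)⁻¹ ?_
    have : ∀ i ∈ P, HasDerivWithinAt (fun s => a i • x i s)
        (∑ j ∈ Finset.univ.filter (fun j => j ≠ i), F i j) (Set.Ico (0:ℝ) T) t := by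
      intro i _
      have h1 := (hderiv i t ht).const_smul (a i)
      refine h1.congr_deriv (Eq.symm ?_)
      rw [Finset.smul_sum]
      refine Finset.sum_congr rfl fun j _ => ?_
      rw [smul_smul]
      simp only [hF]
      rw [mul_div_assoc]
    exact HasDerivWithinAt.fun_sum this
  -- cancellation of internal interactions
  set G : Fin N → Fin N → ℂ := fun i j => if i = j then 0 else F i j with hG
  have hGanti : ∀ i j, G i j = -G j i := by
    intro i j
    by_cases h : i = j
    · simp [hG, h]
    · simp only [hG, if_neg h, if_neg (Ne.symm h), hF]
      rw [norm_sub_rev (x j t), mul_comm (a j), ← smul_neg]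
      congr 1
      ring
  have hinner : ∑ i ∈ P, ∑ j ∈ P, G i j = 0 := by
    have h2 : ∑ i ∈ P, ∑ j ∈ P, G i j = -∑ i ∈ P, ∑ j ∈ P, G i j := by
      conv_lhs => rw [Finset.sum_comm]
      rw [← Finset.sum_neg_distrib]
      refine Finset.sum_congr rfl fun i _ => ?_
      rw [← Finset.sum_neg_distrib]
      exact Finset.sum_congr rfl fun j _ => (hGanti j i)
    linear_combination h2 / 2
  have hsplit : ∀ i ∈ P, ∑ j ∈ Finset.univ.filter (fun j => j ≠ i), F i j
      = (∑ j ∈ P, G i j) + ∑ j ∈ Pᶜ, F i j := by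
    intro i hi
    have e1 : ∑ j ∈ Finset.univ.filter (fun j => j ≠ i), F i j = ∑ j : Fin N, G i j := by
      rw [Finset.sum_filter]
      refine Finset.sum_congr rfl fun j _ => ?_
      by_cases h : j = i
      · simp [hG, h]
      · simp [hG, h, Ne.symm h]
    have e2 : ∑ j ∈ P, G i j + ∑ j ∈ Pᶜ, G i j = ∑ j : Fin N, G i j :=
      Finset.sum_add_sum_compl P _
    have e3 : ∑ j ∈ Pᶜ, G i j = ∑ j ∈ Pᶜ, F i j := by
      refine Finset.sum_congr rfl fun j hj => ?_
      have hij : i ≠ j := fun h => (Finset.mem_compl.mp hj) (h ▸ hi)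
      simp [hG, hij]
    rw [e1, ← e2, e3]
  have htot : ∑ i ∈ P, ∑ j ∈ Finset.univ.filter (fun j => j ≠ i), F i j
      = ∑ i ∈ P, ∑ j ∈ Pᶜ, F i j := by
    rw [Finset.sum_congr rfl hsplit, Finset.sum_add_distrib, hinner, zero_add]
  refine ⟨(∑ i ∈ P, a i)⁻¹ • ∑ i ∈ P, ∑ j ∈ Pᶜ, F i j, by rw [← htot]; exact hv, ?_⟩
  -- norm bound
  have hFnorm : ∀ i ∈ P, ∀ j ∈ Pᶜ, ‖F i j‖ ≤ M ^ 2 * (1 / ‖x i t - x j t‖ ^ α) := by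
    intro i hi j hj
    have hij : i ≠ j := fun h => (Finset.mem_compl.mp hj) (h ▸ hi)
    have hd : 0 < ‖x i t - x j t‖ :=
      norm_pos_iff.mpr (sub_ne_zero.mpr (hsep i j hij t ht))
    set d : ℝ := ‖x i t - x j t‖ with hdd
    have hnorm : ‖F i j‖ = |a i * a j| / d ^ (α + 1) * d := by
      simp only [hF]
      rw [norm_smul, norm_mul, Complex.norm_I, one_mul, Real.norm_eq_abs,
        abs_div, abs_of_nonneg (Real.rpow_nonneg hd.le _)]
    rw [hnorm, Real.rpow_add_one hd.ne']
    rw [abs_mul]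
    have h1 : |a i| * |a j| / (d ^ α * d) * d = |a i| * |a j| * (1 / d ^ α) := by
      field_simp
    rw [h1]
    have h2 : |a i| * |a j| ≤ M ^ 2 := by
      have := hai i; have := hai j
      nlinarith [abs_nonneg (a i), abs_nonneg (a j)]
    have h3 : 0 ≤ 1 / d ^ α := by positivity
    exact mul_le_mul_of_nonneg_right h2 h3
  have hW : ‖∑ i ∈ P, ∑ j ∈ Pᶜ, F i j‖ ≤ M ^ 2 * ∑ i ∈ P, ∑ j ∈ Pᶜ, 1 / ‖x i t - x j t‖ ^ α := by
    calc ‖∑ i ∈ P, ∑ j ∈ Pᶜ, F i j‖ ≤ ∑ i ∈ P, ‖∑ j ∈ Pᶜ, F i j‖ := norm_sum_le _ _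
      _ ≤ ∑ i ∈ P, ∑ j ∈ Pᶜ, ‖F i j‖ :=
          Finset.sum_le_sum fun i _ => norm_sum_le _ _
      _ ≤ ∑ i ∈ P, ∑ j ∈ Pᶜ, M ^ 2 * (1 / ‖x i t - x j t‖ ^ α) :=
          Finset.sum_le_sum fun i hi => Finset.sum_le_sum fun j hj => hFnorm i hi j hj
      _ = M ^ 2 * ∑ i ∈ P, ∑ j ∈ Pᶜ, 1 / ‖x i t - x j t‖ ^ α := by
          rw [Finset.mul_sum]
          exact Finset.sum_congr rfl fun i _ => (Finset.mul_sum _ _ _).symm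
  have hinv : |∑ i ∈ P, a i|⁻¹ ≤ S := by
    have := Finset.single_le_sum
      (f := fun Q : Finset (Fin N) => if (∑ i ∈ Q, a i) = 0 then 0 else |∑ i ∈ Q, a i|⁻¹)
      (fun Q _ => by beta_reduce; split_ifs with h <;> positivity)
      (mem_univ P)
    simp only [if_neg hsum] at this
    rw [hSdef]
    exact this
  have hSig0 : 0 ≤ ∑ i ∈ P, ∑ j ∈ Pᶜ, 1 / ‖x i t - x j t‖ ^ α :=
    Finset.sum_nonneg fun i _ => Finset.sum_nonneg fun j _ => by positivity
  rw [norm_smul, Real.norm_eq_abs, abs_inv]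
  calc |∑ i ∈ P, a i|⁻¹ * ‖∑ i ∈ P, ∑ j ∈ Pᶜ, F i j‖
      ≤ S * (M ^ 2 * ∑ i ∈ P, ∑ j ∈ Pᶜ, 1 / ‖x i t - x j t‖ ^ α) :=
        mul_le_mul hinv hW (norm_nonneg _) hS0
    _ ≤ (1 + S) * (M ^ 2 * ∑ i ∈ P, ∑ j ∈ Pᶜ, 1 / ‖x i t - x j t‖ ^ α) := by
        have : (0:ℝ) ≤ M ^ 2 * ∑ i ∈ P, ∑ j ∈ Pᶜ, 1 / ‖x i t - x j t‖ ^ α := by positivity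
        nlinarith
    _ = (1 + S) * M ^ 2 * ∑ i ∈ P, ∑ j ∈ Pᶜ, 1 / ‖x i t - x j t‖ ^ α := by ring
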